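/- arXiv:1001.0314 — 4 statements merged into one kernel-verified Lean document; each statement's English description precedes it below -/
import Mathlib

section
/- If F_1, F_2 : \mathbb{N}_{\geq 1} \to \mathbb{N} satisfy F_j(n) = \sum_{d|n} d \cdot O_j(d) for j = 1,2, and O(n) is defined by the Möbius inversion of the product F(n) = F_1(n) F_2(n), then O(n) = \sum_{lcm(d_1,d_2) = n} gcd(d_1, d_2) O_1(d_1) O_2(d_2). -/
open ArithmeticFunction
open scoped ArithmeticFunction.Moebius

/-- If `F_j(n) = ∑_{d ∣ n} d · O_j(d)` for `j = 1, 2` and `O` is defined by Möbius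
inversion of the product `F(n) = F₁(n)·F₂(n)`, then
`O(n) = ∑_{lcm(d₁,d₂) = n} gcd(d₁,d₂) O₁(d₁) O₂(d₂)`. -/
theorem orbit_count_of_product (F₁ F₂ O₁ O₂ : ℕ → ℕ)
    (hF₁ : ∀ n : ℕ, 1 ≤ n → F₁ n = ∑ d ∈ n.divisors, d * O₁ d)
    (hF₂ : ∀ n : ℕ, 1 ≤ n → F₂ n = ∑ d ∈ n.divisors, d * O₂ d)
    (O : ℕ → ℤ)
    (hO : ∀ n : ℕ, 1 ≤ n →
      (n : ℤ) * O n = ∑ d ∈ n.divisors, (μ (n / d) : ℤ) * (F₁ d * F₂ d))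
    (n : ℕ) (hn : 1 ≤ n) :
    O n = ∑ p ∈ (n.divisors ×ˢ n.divisors).filter (fun p => Nat.lcm p.1 p.2 = n),
      (Nat.gcd p.1 p.2 : ℤ) * O₁ p.1 * O₂ p.2 := by
  -- the candidate orbit-count function
  set S : ℕ → ℤ := fun m => ∑ p ∈ (m.divisors ×ˢ m.divisors).filter
      (fun p => Nat.lcm p.1 p.2 = m), (Nat.gcd p.1 p.2 : ℤ) * O₁ p.1 * O₂ p.2 with hS
  -- key summation identity: ∑_{d ∣ m} d • S d = F₁ m * F₂ m
  have key : ∀ m : ℕ, m > 0 → ∑ d ∈ m.divisors, ((d : ℤ) * S d) = (F₁ m : ℤ) * F₂ m := by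
    intro m hm
    -- rewrite each fiber S d (d ∣ m) using pairs of divisors of m
    have fib : ∀ d ∈ m.divisors, ((d : ℤ) * S d) =
        ∑ p ∈ (m.divisors ×ˢ m.divisors).filter (fun p => Nat.lcm p.1 p.2 = d),
          ((p.1 : ℤ) * O₁ p.1) * ((p.2 : ℤ) * O₂ p.2) := by
      intro d hd
      obtain ⟨hdm, hm0⟩ := Nat.mem_divisors.mp hd
      have hd0 : 0 < d := Nat.pos_of_mem_divisors hd
      have hset : (d.divisors ×ˢ d.divisors).filter (fun p => Nat.lcm p.1 p.2 = d)
          = (m.divisors ×ˢ m.divisors).filter (fun p => Nat.lcm p.1 p.2 = d) := by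
        ext p
        simp only [Finset.mem_filter, Finset.mem_product, Nat.mem_divisors]
        constructor
        · rintro ⟨⟨⟨h1, _⟩, ⟨h2, _⟩⟩, hl⟩
          exact ⟨⟨⟨h1.trans hdm, hm0⟩, ⟨h2.trans hdm, hm0⟩⟩, hl⟩
        · rintro ⟨⟨⟨h1, _⟩, ⟨h2, _⟩⟩, hl⟩
          refine ⟨⟨⟨?_, hd0.ne'⟩, ⟨?_, hd0.ne'⟩⟩, hl⟩
          · exact hl ▸ Nat.dvd_lcm_left p.1 p.2
          · exact hl ▸ Nat.dvd_lcm_right p.1 p.2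
      rw [hS, ← hset, Finset.mul_sum]
      refine Finset.sum_congr rfl ?_
      rintro ⟨a, b⟩ hp
      simp only [Finset.mem_filter, Finset.mem_product] at hp
      have : (d : ℤ) * Nat.gcd a b = (a : ℤ) * b := by
        rw [← hp.2]
        have hgl : Nat.lcm a b * Nat.gcd a b = a * b := by
          rw [mul_comm]; exact Nat.gcd_mul_lcm a b
        exact_mod_cast congrArg (Nat.cast : ℕ → ℤ) hgl
      calc (d : ℤ) * ((Nat.gcd a b : ℤ) * O₁ a * O₂ b)
          = ((d : ℤ) * Nat.gcd a b) * O₁ a * O₂ b := by ring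
        _ = ((a : ℤ) * b) * O₁ a * O₂ b := by rw [this]
        _ = ((a : ℤ) * O₁ a) * ((b : ℤ) * O₂ b) := by ring
    have hmaps : ∀ p ∈ m.divisors ×ˢ m.divisors, Nat.lcm p.1 p.2 ∈ m.divisors := by
      intro p hp
      simp only [Finset.mem_product, Nat.mem_divisors] at hp
      exact Nat.mem_divisors.mpr ⟨Nat.lcm_dvd hp.1.1 hp.2.1, hm.ne'⟩
    rw [Finset.sum_congr rfl fib,
      Finset.sum_fiberwise_of_maps_to hmaps
        (fun p => ((p.1 : ℤ) * O₁ p.1) * ((p.2 : ℤ) * O₂ p.2)),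
      hF₁ m hm, hF₂ m hm]
    push_cast
    rw [Finset.sum_mul_sum, ← Finset.sum_product']
  -- Möbius inversion
  have inv := (sum_eq_iff_sum_mul_moebius_eq (R := ℤ)
    (f := fun d => (d : ℤ) * S d) (g := fun m => (F₁ m : ℤ) * F₂ m)).mp key n hn
  simp only [Int.cast_id] at inv
  have h2 : (∑ x ∈ n.divisorsAntidiagonal, (μ x.1 : ℤ) * ((F₁ x.2 : ℤ) * F₂ x.2))
      = ∑ d ∈ n.divisors, (μ (n / d) : ℤ) * (F₁ d * F₂ d) :=
    Nat.sum_divisorsAntidiagonal' (f := fun x y => (μ x : ℤ) * ((F₁ y : ℤ) * F₂ y))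
  have hn' : (n : ℤ) * O n = (n : ℤ) * S n := by
    rw [hO n hn, ← h2, inv]
  have hnz : (n : ℤ) ≠ 0 := by exact_mod_cast Nat.pos_of_ne_zero (by omega) |>.ne'
  exact mul_left_cancel₀ hnz hn'
end

section
/- If a non-degenerate exponential sum F(n) = \sum_{i=1}^r \beta_i^n - \sum_{i=1}^s \alpha_i^n with complex \alpha_i, \beta_j satisfies F(n) \geq 0 for all n \geq 1 and F(n) does not eventually vanish, then \max_i |\beta_i| \geq \max_i |\alpha_i|. -/
open Complex

open Filter Finset Topology ComplexConjugate in
private lemma cesaro_geom (z : ℂ) (hz : ‖z‖ ≤ 1) :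
    Filter.Tendsto (fun N : ℕ => (∑ n ∈ Finset.range N, z ^ (n + 1)) / N) Filter.atTop
      (nhds (if z = 1 then 1 else 0)) := by
  rcases eq_or_ne z 1 with h | h
  · subst h
    simp only [if_pos rfl, one_pow, Finset.sum_const, Finset.card_range, nsmul_eq_mul, mul_one]
    have h1 : ∀ᶠ N : ℕ in atTop, ((N : ℂ) / (N : ℂ)) = 1 := by
      filter_upwards [eventually_ne_atTop 0] with N hN
      exact div_self (Nat.cast_ne_zero.mpr hN)
    exact Filter.Tendsto.congr' (Filter.EventuallyEq.symm h1) tendsto_const_nhds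
  · rw [if_neg h]
    apply squeeze_zero_norm (a := fun N : ℕ => (2 / ‖z - 1‖) / N)
      _ (tendsto_const_div_atTop_nhds_zero_nat _)
    intro N
    rw [norm_div, Complex.norm_natCast]
    have hb : ‖∑ n ∈ Finset.range N, z ^ (n + 1)‖ ≤ 2 / ‖z - 1‖ := by
      have e : ∑ n ∈ Finset.range N, z ^ (n + 1) = z * ((z ^ N - 1) / (z - 1)) := by
        rw [← geom_sum_eq h, Finset.mul_sum]
        exact Finset.sum_congr rfl fun n _ => pow_succ' z n
      rw [e, norm_mul, norm_div]
      have h1 : ‖z ^ N - 1‖ ≤ 2 := by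
        have := pow_le_one₀ (norm_nonneg z) hz (n := N)
        calc ‖z ^ N - 1‖ ≤ ‖z ^ N‖ + ‖(1 : ℂ)‖ := norm_sub_le _ _
          _ ≤ 2 := by rw [norm_pow, norm_one]; linarith
      have hz1 : 0 < ‖z - 1‖ := by
        rw [norm_pos_iff]; exact sub_ne_zero.mpr h
      calc ‖z‖ * (‖z ^ N - 1‖ / ‖z - 1‖) ≤ 1 * (2 / ‖z - 1‖) := by
            apply mul_le_mul hz _ (by positivity) zero_le_one
            exact div_le_div_of_nonneg_right h1 hz1.le
        _ = 2 / ‖z - 1‖ := one_mul _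
    exact div_le_div_of_nonneg_right hb (Nat.cast_nonneg N)

open Filter Finset Topology in
private lemma cesaro_sum {σ : Type*} [Fintype σ] (v : σ → ℂ) (hv : ∀ j, ‖v j‖ ≤ 1) :
    Filter.Tendsto (fun N : ℕ => (∑ n ∈ Finset.range N, ∑ j, v j ^ (n + 1)) / N) Filter.atTop
      (nhds ((Finset.univ.filter fun j => v j = 1).card : ℂ)) := by
  classical
  have h := tendsto_finset_sum Finset.univ
    (fun j (_ : j ∈ Finset.univ) => cesaro_geom (v j) (hv j))
  have e1 : ∀ N : ℕ, ∑ j, (∑ n ∈ Finset.range N, v j ^ (n + 1)) / (N : ℂ)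
      = (∑ n ∈ Finset.range N, ∑ j, v j ^ (n + 1)) / N := by
    intro N; rw [← Finset.sum_div, Finset.sum_comm]
  have e2 : (∑ j, if v j = 1 then (1 : ℂ) else 0)
      = ((Finset.univ.filter fun j => v j = 1).card : ℂ) := by
    simp [Finset.sum_boole]
  rw [← e2]
  exact Filter.Tendsto.congr e1 h

open Filter Finset Topology ComplexConjugate in
private lemma exists_re_large {σ : Type*} [Fintype σ] [Nonempty σ] (u : σ → ℂ)
    (hu : ∀ j, ‖u j‖ ≤ 1) (j0 : σ) (hj0 : ‖u j0‖ = 1) (N0 : ℕ) :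
    ∃ n : ℕ, N0 ≤ n ∧ 1 ≤ n ∧
      1 / (8 * (Fintype.card σ : ℝ)) < (∑ j, u j ^ n).re := by
  classical
  by_contra hcon
  push_neg at hcon
  set M : ℝ := (Fintype.card σ : ℝ) with hMdef
  have hM : 1 ≤ M := by
    rw [hMdef]; exact_mod_cast Fintype.card_pos
  set δ : ℝ := 1 / (8 * M) with hδdef
  have hδpos : 0 < δ := by rw [hδdef]; positivity
  set c : ℕ := (Finset.univ.filter fun j : σ => u j = 1).card with hcdef
  set d : ℕ := (Finset.univ.filter fun p : σ × σ => u p.1 * u p.2 = 1).card with hddef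
  set m : ℕ := (Finset.univ.filter fun p : σ × σ => u p.1 * conj (u p.2) = 1).card with hmdef
  have hm1 : 1 ≤ (m : ℝ) := by
    have hmem : (j0, j0) ∈ (Finset.univ.filter fun p : σ × σ => u p.1 * conj (u p.2) = 1) := by
      refine Finset.mem_filter.mpr ⟨Finset.mem_univ _, ?_⟩
      have h : u j0 * conj (u j0) = ((Complex.normSq (u j0) : ℝ) : ℂ) := Complex.mul_conj _
      rw [h, Complex.normSq_eq_norm_sq, hj0]
      norm_num
    have h : 0 < m := Finset.card_pos.mpr ⟨_, hmem⟩
    exact_mod_cast h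
  have A1 : Tendsto (fun N : ℕ => (∑ n ∈ Finset.range N, (∑ j, u j ^ (n + 1)).re) / (N : ℝ))
      atTop (𝓝 (c : ℝ)) := by
    have h := (Complex.continuous_re.tendsto _).comp (cesaro_sum u hu)
    simp only [Function.comp_def] at h
    have h2 : Tendsto (fun N : ℕ =>
        (∑ n ∈ Finset.range N, (∑ j, u j ^ (n + 1)).re) / (N : ℝ)) atTop
        (𝓝 (((c : ℂ)).re)) := by
      apply Filter.Tendsto.congr _ h
      intro N
      rw [← Complex.ofReal_natCast, Complex.div_ofReal_re, Complex.re_sum]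
    simpa using h2
  have hv2 : ∀ p : σ × σ, ‖u p.1 * u p.2‖ ≤ 1 := by
    intro p
    rw [norm_mul]
    exact mul_le_one₀ (hu _) (norm_nonneg _) (hu _)
  have hv3 : ∀ p : σ × σ, ‖u p.1 * conj (u p.2)‖ ≤ 1 := by
    intro p
    rw [norm_mul, RCLike.norm_conj]
    exact mul_le_one₀ (hu _) (norm_nonneg _) (hu _)
  have hsq : ∀ n : ℕ, (∑ p : σ × σ, (u p.1 * u p.2) ^ n)
      = (∑ j, u j ^ n) * (∑ j, u j ^ n) := by
    intro n
    rw [Finset.sum_mul_sum, ← Finset.sum_product']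
    rw [show ((Finset.univ : Finset σ) ×ˢ (Finset.univ : Finset σ)) = Finset.univ from rfl]
    exact Finset.sum_congr rfl fun p _ => mul_pow _ _ _
  have hsq' : ∀ n : ℕ, (∑ p : σ × σ, (u p.1 * conj (u p.2)) ^ n)
      = (∑ j, u j ^ n) * conj (∑ j, u j ^ n) := by
    intro n
    rw [map_sum, Finset.sum_mul_sum, ← Finset.sum_product']
    rw [show ((Finset.univ : Finset σ) ×ˢ (Finset.univ : Finset σ)) = Finset.univ from rfl]
    exact Finset.sum_congr rfl fun p _ => by rw [mul_pow, map_pow]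
  have A2 : Tendsto (fun N : ℕ =>
      (∑ n ∈ Finset.range N, ((∑ j, u j ^ (n + 1)) * (∑ j, u j ^ (n + 1))).re) / (N : ℝ))
      atTop (𝓝 (d : ℝ)) := by
    have h := (Complex.continuous_re.tendsto _).comp (cesaro_sum _ hv2)
    simp only [Function.comp_def] at h
    have h2 : Tendsto (fun N : ℕ =>
        (∑ n ∈ Finset.range N, ((∑ j, u j ^ (n + 1)) * (∑ j, u j ^ (n + 1))).re) / (N : ℝ))
        atTop (𝓝 (((d : ℂ)).re)) := by
      apply Filter.Tendsto.congr _ h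
      intro N
      rw [show (∑ n ∈ Finset.range N, ∑ p : σ × σ, (u p.1 * u p.2) ^ (n + 1))
          = ∑ n ∈ Finset.range N, (∑ j, u j ^ (n + 1)) * (∑ j, u j ^ (n + 1)) from
        Finset.sum_congr rfl fun n _ => hsq (n + 1)]
      rw [← Complex.ofReal_natCast, Complex.div_ofReal_re, Complex.re_sum]
    simpa using h2
  have A3 : Tendsto (fun N : ℕ =>
      (∑ n ∈ Finset.range N, ((∑ j, u j ^ (n + 1)) * conj (∑ j, u j ^ (n + 1))).re) / (N : ℝ))
      atTop (𝓝 (m : ℝ)) := by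
    have h := (Complex.continuous_re.tendsto _).comp (cesaro_sum _ hv3)
    simp only [Function.comp_def] at h
    have h2 : Tendsto (fun N : ℕ =>
        (∑ n ∈ Finset.range N, ((∑ j, u j ^ (n + 1)) * conj (∑ j, u j ^ (n + 1))).re) / (N : ℝ))
        atTop (𝓝 (((m : ℂ)).re)) := by
      apply Filter.Tendsto.congr _ h
      intro N
      rw [show (∑ n ∈ Finset.range N, ∑ p : σ × σ, (u p.1 * conj (u p.2)) ^ (n + 1))
          = ∑ n ∈ Finset.range N, (∑ j, u j ^ (n + 1)) * conj (∑ j, u j ^ (n + 1)) from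
        Finset.sum_congr rfl fun n _ => hsq' (n + 1)]
      rw [← Complex.ofReal_natCast, Complex.div_ofReal_re, Complex.re_sum]
    simpa using h2
  have hre2 : ∀ z : ℂ, (z.re) ^ 2 = ((z * z).re + (z * conj z).re) / 2 := by
    intro z
    simp only [Complex.mul_re, Complex.conj_re, Complex.conj_im, sq]
    ring
  have A4 : Tendsto (fun N : ℕ =>
      (∑ n ∈ Finset.range N, ((∑ j, u j ^ (n + 1)).re) ^ 2) / (N : ℝ))
      atTop (𝓝 (((d : ℝ) + (m : ℝ)) / 2)) := by
    have h := (A2.add A3).div_const 2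
    apply Filter.Tendsto.congr _ h
    intro N
    have e1 : ∑ n ∈ Finset.range N, ((∑ j, u j ^ (n + 1)).re) ^ 2
        = (∑ n ∈ Finset.range N, ((∑ j, u j ^ (n + 1)) * (∑ j, u j ^ (n + 1))).re
           + ∑ n ∈ Finset.range N, ((∑ j, u j ^ (n + 1)) * conj (∑ j, u j ^ (n + 1))).re) / 2 := by
      rw [← Finset.sum_add_distrib, Finset.sum_div]
      exact Finset.sum_congr rfl fun n _ => hre2 _
    rw [e1]
    ring
  have habs : ∀ n : ℕ, |(∑ j, u j ^ n).re| ≤ M := by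
    intro n
    calc |(∑ j, u j ^ n).re| ≤ ‖∑ j, u j ^ n‖ := Complex.abs_re_le_norm _
      _ = ‖∑ j, u j ^ n‖ := rfl
      _ ≤ ∑ j : σ, ‖u j ^ n‖ := norm_sum_le _ _
      _ ≤ ∑ _j : σ, (1 : ℝ) := Finset.sum_le_sum fun j _ => by
            rw [norm_pow]; exact pow_le_one₀ (norm_nonneg _) (hu j)
      _ = M := by simp [hMdef]
  set g : ℕ → ℝ := fun n => M * (2 * δ - (∑ j, u j ^ n).re) - ((∑ j, u j ^ n).re) ^ 2 with hgdef
  set N1 : ℕ := max N0 1 with hN1def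
  have hgnn : ∀ n : ℕ, N1 ≤ n → 0 ≤ g n := by
    intro n hn
    have ha : (∑ j, u j ^ n).re ≤ δ :=
      hcon n (le_trans (le_max_left _ _) hn) (le_trans (le_max_right _ _) hn)
    have h2 : |(∑ j, u j ^ n).re| ≤ 2 * δ - (∑ j, u j ^ n).re := by
      rcases abs_cases ((∑ j, u j ^ n).re) with ⟨h, _⟩ | ⟨h, _⟩ <;> linarith
    have h3 : ((∑ j, u j ^ n).re) ^ 2 ≤ M * (2 * δ - (∑ j, u j ^ n).re) := by
      rw [← _root_.sq_abs, pow_two]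
      exact mul_le_mul (habs n) h2 (abs_nonneg _) (by linarith)
    rw [hgdef]
    dsimp only
    linarith
  set C : ℝ := ∑ n ∈ Finset.range N1, |g (n + 1)| with hCdef
  have hlow : ∀ᶠ N : ℕ in atTop, -C / (N : ℝ) ≤ (∑ n ∈ Finset.range N, g (n + 1)) / N := by
    filter_upwards [eventually_ge_atTop N1] with N hN
    apply div_le_div_of_nonneg_right _ (Nat.cast_nonneg N)
    rw [← Finset.sum_range_add_sum_Ico _ hN]
    have t1 : -C ≤ ∑ n ∈ Finset.range N1, g (n + 1) := by
      rw [hCdef, ← Finset.sum_neg_distrib]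
      exact Finset.sum_le_sum fun n _ => neg_abs_le _
    have t2 : 0 ≤ ∑ n ∈ Finset.Ico N1 N, g (n + 1) :=
      Finset.sum_nonneg fun n hn =>
        hgnn (n + 1) (le_trans (Finset.mem_Ico.mp hn).1 (Nat.le_succ n))
    linarith
  have first : Tendsto (fun N : ℕ => ((N : ℝ) * (2 * δ * M)) / N) atTop (𝓝 (2 * δ * M)) := by
    have h1 : ∀ᶠ N : ℕ in atTop, ((N : ℝ) * (2 * δ * M)) / N = 2 * δ * M := by
      filter_upwards [eventually_ne_atTop 0] with N hN
      exact mul_div_cancel_left₀ _ (show (N : ℝ) ≠ 0 from Nat.cast_ne_zero.mpr hN)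
    exact Filter.Tendsto.congr' (Filter.EventuallyEq.symm h1) tendsto_const_nhds
  have hgavg : Tendsto (fun N : ℕ => (∑ n ∈ Finset.range N, g (n + 1)) / (N : ℝ))
      atTop (𝓝 (2 * δ * M - M * (c : ℝ) - ((d : ℝ) + (m : ℝ)) / 2)) := by
    have h := (first.sub (A1.const_mul M)).sub A4
    apply Filter.Tendsto.congr _ h
    intro N
    have e0 : ∑ n ∈ Finset.range N, g (n + 1)
        = (N : ℝ) * (2 * δ * M) - M * (∑ n ∈ Finset.range N, (∑ j, u j ^ (n + 1)).re)
          - ∑ n ∈ Finset.range N, ((∑ j, u j ^ (n + 1)).re) ^ 2 := by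
      simp only [hgdef, mul_sub, Finset.sum_sub_distrib, Finset.sum_const, Finset.card_range,
        nsmul_eq_mul, Finset.mul_sum]
      ring
    rw [e0]
    ring
  have hL : (0 : ℝ) ≤ 2 * δ * M - M * (c : ℝ) - ((d : ℝ) + (m : ℝ)) / 2 := by
    have h0 : Tendsto (fun N : ℕ => -C / (N : ℝ)) atTop (𝓝 0) :=
      tendsto_const_div_atTop_nhds_zero_nat _
    exact le_of_tendsto_of_tendsto h0 hgavg hlow
  have h14 : 2 * δ * M = 1 / 4 := by
    rw [hδdef]
    field_simp
    ring
  have hMc : 0 ≤ M * (c : ℝ) := mul_nonneg (by linarith) (Nat.cast_nonneg _)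
  have hd0 : (0 : ℝ) ≤ (d : ℝ) := Nat.cast_nonneg _
  linarith

/-- If a non-degenerate exponential sum `F(n) = ∑ᵢ βᵢⁿ - ∑ⱼ αⱼⁿ` (all `αⱼ, βᵢ` nonzero
and no ratio of two of them is a root of unity other than `1`) is real and nonnegative
for all `n ≥ 1` and does not eventually vanish, then `max |βᵢ| ≥ max |αⱼ|`.
The Evertse / van der Poorten–Schlickewei `S`-unit bound is taken as a black box. -/
theorem dominant_pole_of_nonneg_exponential_sum
    {ι κ : Type*} [Fintype ι] [Fintype κ] [Nonempty ι] [Nonempty κ]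
    (β : ι → ℂ) (α : κ → ℂ)
    (hβ0 : ∀ i, β i ≠ 0) (hα0 : ∀ j, α j ≠ 0)
    (hββ : ∀ i i', i ≠ i' → ∀ n : ℕ, 0 < n → (β i / β i') ^ n ≠ 1)
    (hαα : ∀ j j', j ≠ j' → ∀ n : ℕ, 0 < n → (α j / α j') ^ n ≠ 1)
    (hβα : ∀ i j, (∀ n : ℕ, 0 < n → (β i / α j) ^ n ≠ 1))
    (F : ℕ → ℂ)
    (hF : ∀ n : ℕ, F n = (∑ i, β i ^ n) - ∑ j, α j ^ n)
    (hreal : ∀ n : ℕ, 1 ≤ n → (F n).im = 0 ∧ 0 ≤ (F n).re)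
    (hnotvanish : ¬ ∃ N : ℕ, ∀ n ≥ N, F n = 0)
    (hEvertse : ∀ ε : ℝ, 0 < ε → ∃ N : ℕ, ∀ n ≥ N,
      (⨆ i, ‖β i‖) ^ ((n : ℝ) * (1 - ε)) ≤ ‖∑ i, β i ^ n‖) :
    (⨆ j, ‖α j‖) ≤ ⨆ i, ‖β i‖ := by
  classical
  by_contra hcon
  push_neg at hcon
  set B : ℝ := ⨆ i, ‖β i‖ with hBdef
  set A : ℝ := ⨆ j, ‖α j‖ with hAdef
  -- hcon : B < A
  obtain ⟨j0, hj0max⟩ : ∃ j0, ∀ j, ‖α j‖ ≤ ‖α j0‖ :=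
    Finite.exists_max _
  have hA_eq : A = ‖α j0‖ := by
    rw [hAdef]
    refine le_antisymm (ciSup_le hj0max) ?_
    exact le_ciSup (f := fun j => ‖α j‖) (Set.Finite.bddAbove (Set.finite_range _)) j0
  have hApos : 0 < A := by
    rw [hA_eq]
    exact norm_pos_iff.mpr (hα0 j0)
  have hAle : ∀ j, ‖α j‖ ≤ A := fun j => hA_eq ▸ hj0max j
  have hBle : ∀ i, ‖β i‖ ≤ B := by
    intro i
    rw [hBdef]
    exact le_ciSup (f := fun i => ‖β i‖) (Set.Finite.bddAbove (Set.finite_range _)) i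
  have hB0 : 0 ≤ B := le_trans (norm_nonneg _) (hBle (Classical.arbitrary ι))
  -- normalized family
  set u : κ → ℂ := fun j => α j / (A : ℂ) with hudef
  have hu : ∀ j, ‖u j‖ ≤ 1 := by
    intro j
    rw [hudef]
    dsimp only
    rw [norm_div, Complex.norm_real, Real.norm_of_nonneg hApos.le]
    exact (div_le_one hApos).mpr (hAle j)
  have hu0 : ‖u j0‖ = 1 := by
    rw [hudef]
    dsimp only
    rw [norm_div, Complex.norm_real, Real.norm_of_nonneg hApos.le, ← hA_eq]
    exact div_self hApos.ne'
  set δ : ℝ := 1 / (8 * (Fintype.card κ : ℝ)) with hδdef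
  have hδpos : 0 < δ := by
    rw [hδdef]
    have : (0 : ℝ) < (Fintype.card κ : ℝ) := by exact_mod_cast Fintype.card_pos
    positivity
  -- threshold where (card ι) * B^n < δ * A^n
  have htend : Filter.Tendsto (fun n : ℕ => (Fintype.card ι : ℝ) * (B / A) ^ n)
      Filter.atTop (nhds 0) := by
    have h1 : Filter.Tendsto (fun n : ℕ => (B / A) ^ n) Filter.atTop (nhds 0) :=
      tendsto_pow_atTop_nhds_zero_of_lt_one (div_nonneg hB0 hApos.le)
        ((div_lt_one hApos).mpr hcon)
    simpa using h1.const_mul (Fintype.card ι : ℝ)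
  have hev : ∀ᶠ n : ℕ in Filter.atTop, (Fintype.card ι : ℝ) * (B / A) ^ n < δ :=
    htend.eventually_lt_const hδpos
  obtain ⟨N2, hN2⟩ := Filter.eventually_atTop.mp hev
  obtain ⟨n, hnN2, hn1, hlarge⟩ := exists_re_large u hu j0 hu0 N2
  rw [← hδdef] at hlarge
  -- rewrite the large real part in terms of α
  have hre : (∑ j, u j ^ n).re = (∑ j, α j ^ n).re / A ^ n := by
    have e : (∑ j, u j ^ n) = (∑ j, α j ^ n) / ((A ^ n : ℝ) : ℂ) := by
      rw [Complex.ofReal_pow, Finset.sum_div]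
      refine Finset.sum_congr rfl fun j _ => ?_
      rw [hudef]
      exact div_pow _ _ _
    rw [e, Complex.div_ofReal_re]
  have hlower : δ * A ^ n < (∑ j, α j ^ n).re := by
    have h := hlarge
    rw [hre] at h
    have hAn : (0 : ℝ) < A ^ n := pow_pos hApos n
    calc δ * A ^ n < ((∑ j, α j ^ n).re / A ^ n) * A ^ n := by
          exact mul_lt_mul_of_pos_right h hAn
      _ = (∑ j, α j ^ n).re := div_mul_cancel₀ _ hAn.ne'
  -- upper bound from nonnegativity and size of β
  have hupper : (∑ j, α j ^ n).re ≤ (Fintype.card ι : ℝ) * B ^ n := by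
    have h1 : 0 ≤ (F n).re := (hreal n hn1).2
    have h2 : (F n).re = (∑ i, β i ^ n).re - (∑ j, α j ^ n).re := by
      rw [hF n, Complex.sub_re]
    have h3 : (∑ j, α j ^ n).re ≤ (∑ i, β i ^ n).re := by linarith
    have h4 : (∑ i, β i ^ n).re ≤ (Fintype.card ι : ℝ) * B ^ n := by
      calc (∑ i, β i ^ n).re ≤ ‖∑ i, β i ^ n‖ := Complex.re_le_norm _
        _ = ‖∑ i, β i ^ n‖ := rfl
        _ ≤ ∑ i, ‖β i ^ n‖ := norm_sum_le _ _
        _ ≤ ∑ _i : ι, B ^ n := Finset.sum_le_sum fun i _ => by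
              rw [norm_pow]
              exact pow_le_pow_left₀ (norm_nonneg _) (hBle i) n
        _ = (Fintype.card ι : ℝ) * B ^ n := by
              rw [Finset.sum_const, Finset.card_univ, nsmul_eq_mul]
    linarith
  -- combine
  have hsmall : (Fintype.card ι : ℝ) * B ^ n < δ * A ^ n := by
    have h := hN2 n hnN2
    have hAn : (0 : ℝ) < A ^ n := pow_pos hApos n
    have e : (Fintype.card ι : ℝ) * (B / A) ^ n = ((Fintype.card ι : ℝ) * B ^ n) / A ^ n := by
      rw [div_pow]; ring
    rw [e, div_lt_iff₀ hAn] at h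
    linarith [h]
  linarith
end

section
/- Let T have exactly one closed orbit of each length, so F_T(n) = \sigma_1(n). Then the orbit Dirichlet series of T \times T satisfies, for \Re(s) > 2: \sum_{n\geq 1} O_{T\times T}(n) n^{-s} = \zeta(s)^2 \zeta(s-1) / \zeta(2s), where O_{T\times T}(n) = (1/n)\sum_{d|n} \mu(n/d) \sigma_1(d)^2. -/
open ArithmeticFunction Finset
open scoped LSeries.notation
open scoped ArithmeticFunction.sigma ArithmeticFunction.Moebius ArithmeticFunction.zeta

namespace OrbitAux

noncomputable section

/-- `σ₁` as a `ℂ`-valued arithmetic function. -/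
def A : ArithmeticFunction ℂ := ↑(σ 1)

/-- `μ²` (pointwise) as a `ℂ`-valued arithmetic function. -/
def U : ArithmeticFunction ℂ :=
  pmul (↑(ArithmeticFunction.moebius) : ArithmeticFunction ℂ) ↑(ArithmeticFunction.moebius)

/-- indicator of nonzero squares. -/
def S : ArithmeticFunction ℂ := ⟨fun n => if n ≠ 0 ∧ IsSquare n then 1 else 0, by simp⟩

/-- `n·((σ₁ ⍟ μ²)(n))`. -/
def W : ArithmeticFunction ℂ := pmul (↑(ArithmeticFunction.pow 1)) (A * U)

lemma S_apply (n : ℕ) : S n = if n ≠ 0 ∧ IsSquare n then 1 else 0 := rfl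

lemma A_apply (n : ℕ) : A n = (σ 1 n : ℂ) := rfl

lemma U_apply (n : ℕ) : U n = ((μ n : ℤ) : ℂ) * ((μ n : ℤ) : ℂ) := rfl

lemma U_one : U 1 = 1 := by simp [U_apply]

lemma U_prime {p : ℕ} (hp : p.Prime) : U p = 1 := by
  simp [U_apply, moebius_apply_prime hp]

lemma U_prime_pow {p k : ℕ} (hp : p.Prime) (hk : 2 ≤ k) : U (p ^ k) = 0 := by
  rw [U_apply, moebius_apply_prime_pow hp (by omega)]
  rw [if_neg (by omega)]
  simp

lemma isSquare_prime_pow_iff {p k : ℕ} (hp : p.Prime) : IsSquare (p ^ k) ↔ Even k := by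
  constructor
  · rintro ⟨c, hc⟩
    have hcd : c ∣ p ^ k := Dvd.intro_left c hc.symm
    obtain ⟨j, hj, rfl⟩ := (Nat.dvd_prime_pow hp).mp hcd
    rw [← pow_add] at hc
    have := Nat.pow_right_injective hp.two_le hc
    exact this ▸ ⟨j, rfl⟩
  · rintro ⟨j, rfl⟩
    exact ⟨p ^ j, by rw [← pow_add]⟩

lemma S_isMultiplicative : S.IsMultiplicative := by
  constructor
  · simp [S_apply]
  · intro m n h
    rcases eq_or_ne m 0 with rfl | hm
    · obtain rfl : n = 1 := (Nat.coprime_zero_left n).mp h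
      simp [S_apply]
    rcases eq_or_ne n 0 with rfl | hn
    · obtain rfl : m = 1 := (Nat.coprime_zero_right m).mp h
      simp [S_apply]
    have key : IsSquare (m * n) ↔ IsSquare m ∧ IsSquare n := by
      constructor
      · rintro ⟨c, hc⟩
        have hgcd : IsUnit (gcd m n) := Nat.isUnit_iff.mpr h
        obtain ⟨d, hd⟩ := exists_eq_pow_of_mul_eq_pow hgcd
          (show m * n = c ^ 2 by rw [hc, sq])
        have hgcd' : IsUnit (gcd n m) := Nat.isUnit_iff.mpr h.symm
        obtain ⟨e, he⟩ := exists_eq_pow_of_mul_eq_pow hgcd'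
          (show n * m = c ^ 2 by rw [mul_comm, hc, sq])
        exact ⟨⟨d, by rw [hd, sq]⟩, ⟨e, by rw [he, sq]⟩⟩
      · rintro ⟨⟨a, rfl⟩, ⟨b, rfl⟩⟩
        exact ⟨a * b, by ring⟩
    by_cases h1 : IsSquare m <;> by_cases h2 : IsSquare n <;>
      simp [S_apply, hm, hn, mul_ne_zero hm hn, key, h1, h2]

lemma U_isMultiplicative : U.IsMultiplicative :=
  (isMultiplicative_moebius.intCast).pmul isMultiplicative_moebius.intCast

lemma A_isMultiplicative : A.IsMultiplicative := isMultiplicative_sigma.natCast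

lemma W_isMultiplicative : W.IsMultiplicative :=
  (isMultiplicative_pow.natCast).pmul (A_isMultiplicative.mul U_isMultiplicative)

lemma AU_prime_pow_succ {p : ℕ} (hp : p.Prime) (j : ℕ) :
    (A * U) (p ^ (j + 1)) = (σ 1 (p ^ (j + 1)) : ℂ) + (σ 1 (p ^ j) : ℂ) := by
  rw [mul_comm A U, mul_apply, Nat.sum_divisorsAntidiagonal (f := fun x y => U x * A y),
    Nat.sum_divisors_prime_pow hp]
  have hdiv : ∀ i ∈ range (j + 2), p ^ (j + 1) / p ^ i = p ^ (j + 1 - i) := by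
    intro i hi
    rw [Nat.pow_div (by simpa using Nat.lt_succ_iff.mp (mem_range.mp hi)) hp.pos]
  rw [Finset.sum_congr rfl fun i hi => by rw [hdiv i hi]]
  rw [Finset.sum_range_succ', Finset.sum_range_succ']
  have hz : ∀ i ∈ range j, U (p ^ (i + 1 + 1)) * A (p ^ (j + 1 - (i + 1 + 1))) = 0 := by
    intro i _
    rw [U_prime_pow hp (by omega), zero_mul]
  rw [Finset.sum_eq_zero hz]
  simp only [pow_zero, pow_one, zero_add]
  rw [U_prime hp, U_one]
  norm_num [A_apply]
  ring

lemma W_prime_pow_succ {p : ℕ} (hp : p.Prime) (j : ℕ) :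
    W (p ^ (j + 1)) = (p : ℂ) ^ (j + 1) * ((σ 1 (p ^ (j + 1)) : ℂ) + (σ 1 (p ^ j) : ℂ)) := by
  rw [W, pmul_apply, AU_prime_pow_succ hp j, natCoe_apply, pow_apply,
    if_neg (by simp)]
  push_cast
  ring

lemma sigma_succ {p : ℕ} (hp : p.Prime) (j : ℕ) :
    (σ 1 (p ^ (j + 1)) : ℂ) = (σ 1 (p ^ j) : ℂ) + (p : ℂ) ^ (j + 1) := by
  rw [sigma_one_apply_prime_pow hp, sigma_one_apply_prime_pow hp, Finset.sum_range_succ]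
  push_cast
  ring

lemma key1 : A.pmul A = ↑ζ * W := by
  rw [ArithmeticFunction.IsMultiplicative.eq_iff_eq_on_prime_powers _
    (A_isMultiplicative.pmul A_isMultiplicative) _
    (isMultiplicative_zeta.natCast.mul W_isMultiplicative)]
  intro p i hp
  rw [coe_zeta_mul_apply, Nat.sum_divisors_prime_pow hp]
  induction i with
  | zero =>
    simp only [zero_add, Finset.sum_range_one, pow_zero, pmul_apply,
      A_isMultiplicative.map_one, W_isMultiplicative.map_one, mul_one]
  | succ j ih =>
    rw [Finset.sum_range_succ, ← ih]
    simp only [pmul_apply, A_apply]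
    rw [W_prime_pow_succ hp j, sigma_succ hp j]
    ring

lemma key2 : U * S = (↑ζ : ArithmeticFunction ℂ) := by
  rw [ArithmeticFunction.IsMultiplicative.eq_iff_eq_on_prime_powers _
    (U_isMultiplicative.mul S_isMultiplicative) _ isMultiplicative_zeta.natCast]
  intro p i hp
  rw [natCoe_apply, zeta_apply_ne (pow_ne_zero i hp.pos.ne'), Nat.cast_one]
  rw [mul_apply, Nat.sum_divisorsAntidiagonal (f := fun x y => U x * S y),
    Nat.sum_divisors_prime_pow hp]
  have hdiv : ∀ k ∈ range (i + 1), p ^ i / p ^ k = p ^ (i - k) := by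
    intro k hk
    rw [Nat.pow_div (Nat.lt_succ_iff.mp (mem_range.mp hk)) hp.pos]
  rw [Finset.sum_congr rfl fun k hk => by rw [hdiv k hk]]
  cases i with
  | zero => simp [U_one, S_apply]
  | succ j =>
    rw [Finset.sum_range_succ', Finset.sum_range_succ']
    have hz : ∀ k ∈ range j, U (p ^ (k + 1 + 1)) * S (p ^ (j + 1 - (k + 1 + 1))) = 0 := by
      intro k _
      rw [U_prime_pow hp (by omega), zero_mul]
    rw [Finset.sum_eq_zero hz]
    simp only [pow_zero, pow_one, zero_add, Nat.sub_zero, Nat.succ_sub_one]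
    rw [U_prime hp, U_one, one_mul, one_mul]
    have hpj : p ^ j ≠ 0 := pow_ne_zero j hp.pos.ne'
    have hpj1 : p ^ (j + 1) ≠ 0 := pow_ne_zero _ hp.pos.ne'
    rcases Nat.even_or_odd j with he | ho
    · rw [S_apply, S_apply, if_pos ⟨hpj, (isSquare_prime_pow_iff hp).mpr he⟩,
        if_neg]
      · ring
      · rintro ⟨-, hsq⟩
        rw [isSquare_prime_pow_iff hp] at hsq
        exact (Nat.even_add_one.mp hsq) he
    · rw [S_apply, S_apply, if_neg, if_pos ⟨hpj1, (isSquare_prime_pow_iff hp).mpr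
        (Nat.even_add_one.mpr (Nat.not_even_iff_odd.mpr ho))⟩]
      · ring
      · rintro ⟨-, hsq⟩
        rw [isSquare_prime_pow_iff hp] at hsq
        exact (Nat.not_even_iff_odd.mpr ho) hsq

lemma key3 : (↑(ArithmeticFunction.moebius) : ArithmeticFunction ℂ) * (A.pmul A) = W := by
  rw [key1, ← mul_assoc, coe_moebius_mul_coe_zeta, one_mul]

end

end OrbitAux

namespace OrbitAux

noncomputable section

lemma term_S_sq (s : ℂ) (m : ℕ) :
    LSeries.term ↗S s (m ^ 2) = LSeries.term (1 : ℕ → ℂ) (2 * s) m := by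
  rcases eq_or_ne m 0 with rfl | hm
  · simp [LSeries.term]
  · have hm2 : m ^ 2 ≠ 0 := pow_ne_zero _ hm
    rw [LSeries.term_of_ne_zero hm2, LSeries.term_of_ne_zero hm, Pi.one_apply]
    have hS : S (m ^ 2) = 1 := by
      rw [S_apply, if_pos ⟨hm2, ⟨m, sq m⟩⟩]
    rw [hS]
    congr 1
    have him : -Real.pi < (Complex.log (m : ℂ) * 2).im ∧
        (Complex.log (m : ℂ) * 2).im ≤ Real.pi := by
      have : (Complex.log (m : ℂ) * 2).im = 0 := by
        simp [Complex.mul_im, Complex.log_im, Complex.natCast_arg]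
      rw [this]
      exact ⟨neg_neg_of_pos Real.pi_pos, Real.pi_pos.le⟩
    rw [Complex.cpow_mul s him.1 him.2, Complex.cpow_ofNat]
    push_cast
    ring
  
lemma LSeries_S {s : ℂ} (hs2 : 1 < (2 * s).re) : LSeries ↗S s = riemannZeta (2 * s) := by
  have hinj : Function.Injective (fun m : ℕ => m ^ 2) :=
    Nat.pow_left_injective (by norm_num)
  have hsupp : Function.support (LSeries.term ↗S s) ⊆ Set.range (fun m : ℕ => m ^ 2) := by
    intro n hn
    have hn0 : n ≠ 0 := by
      rintro rfl
      exact hn (LSeries.term_zero _ _)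
    have hSn : S n ≠ 0 := by
      intro h
      apply hn
      rw [LSeries.term_of_ne_zero hn0]
      simp [h]
    have hsq : IsSquare n := by
      by_contra h
      exact hSn (by rw [S_apply, if_neg (by tauto)])
    obtain ⟨c, hc⟩ := hsq
    exact ⟨c, by rw [← sq] at hc; exact hc.symm⟩
  calc LSeries ↗S s = ∑' m : ℕ, LSeries.term ↗S s (m ^ 2) := (hinj.tsum_eq hsupp).symm
    _ = LSeries (1 : ℕ → ℂ) (2 * s) := tsum_congr fun m => term_S_sq s m
    _ = riemannZeta (2 * s) := LSeries_one_eq_riemannZeta hs2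

lemma U_norm_le (n : ℕ) : ‖U n‖ ≤ 1 := by
  rw [U_apply]
  by_cases hsq : Squarefree n
  · rw [moebius_apply_of_squarefree hsq]
    push_cast
    rw [norm_mul]
    simp
  · rw [moebius_eq_zero_of_not_squarefree hsq]
    simp

lemma S_norm_le (n : ℕ) : ‖S n‖ ≤ 1 := by
  rw [S_apply]
  split <;> simp

lemma U_summable {s : ℂ} (hs : 1 < s.re) : LSeriesSummable ↗U s :=
  LSeriesSummable_of_bounded_of_one_lt_re (fun n _ => U_norm_le n) hs

lemma S_summable {s : ℂ} (hs : 1 < s.re) : LSeriesSummable ↗S s :=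
  LSeriesSummable_of_bounded_of_one_lt_re (fun n _ => S_norm_le n) hs

lemma coe_zeta_eq : ↗((↑ζ : ArithmeticFunction ℂ)) = ↗(ζ : ArithmeticFunction ℕ) :=
  funext fun n => by simp [natCoe_apply]

lemma zeta_summable {s : ℂ} (hs : 1 < s.re) :
    LSeriesSummable ↗((↑ζ : ArithmeticFunction ℂ)) s := by
  rw [show (↗((↑ζ : ArithmeticFunction ℂ)) : ℕ → ℂ) = ↗(ζ : ArithmeticFunction ℕ) from
    coe_zeta_eq]
  exact LSeriesSummable_zeta_iff.mpr hs

lemma LSeries_coe_zeta {s : ℂ} (hs : 1 < s.re) :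
    LSeries ↗((↑ζ : ArithmeticFunction ℂ)) s = riemannZeta s := by
  rw [show (↗((↑ζ : ArithmeticFunction ℂ)) : ℕ → ℂ) = ↗(ζ : ArithmeticFunction ℕ) from
    coe_zeta_eq]
  exact LSeries_zeta_eq_riemannZeta hs

lemma LSeries_U {s : ℂ} (hs : 1 < s.re) (hs2 : 1 < (2 * s).re) :
    LSeries ↗U s = riemannZeta s / riemannZeta (2 * s) := by
  have h := ArithmeticFunction.LSeries_mul' (U_summable hs) (S_summable hs)
  rw [key2, LSeries_coe_zeta hs, LSeries_S hs2] at h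
  rw [eq_div_iff (riemannZeta_ne_zero_of_one_lt_re hs2)]
  exact h.symm

lemma term_pow_one (s : ℂ) (n : ℕ) :
    LSeries.term ↗(ArithmeticFunction.pow 1) s n = LSeries.term (1 : ℕ → ℂ) (s - 1) n := by
  rcases eq_or_ne n 0 with rfl | hn
  · simp [LSeries.term]
  · rw [LSeries.term_of_ne_zero hn, LSeries.term_of_ne_zero hn, Pi.one_apply]
    have hpow : ((ArithmeticFunction.pow 1 n : ℕ) : ℂ) = (n : ℂ) := by
      rw [pow_apply, if_neg (by simp)]
      push_cast
      ring
    rw [hpow]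
    have hne : (n : ℂ) ≠ 0 := Nat.cast_ne_zero.mpr hn
    have hsplit : (n : ℂ) ^ s = (n : ℂ) * (n : ℂ) ^ (s - 1) := by
      have h2 := Complex.cpow_add 1 (s - 1) hne
      rw [Complex.cpow_one] at h2
      rw [show (1 : ℂ) + (s - 1) = s by ring] at h2
      exact h2
    rw [hsplit, ← div_div, div_self hne]

lemma pow_one_summable {s : ℂ} (hs : 1 < (s - 1).re) :
    LSeriesSummable ↗(ArithmeticFunction.pow 1) s := by
  have ht : LSeries.term ↗(ArithmeticFunction.pow 1) s = LSeries.term (1 : ℕ → ℂ) (s - 1) :=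
    funext (term_pow_one s)
  show Summable (LSeries.term ↗(ArithmeticFunction.pow 1) s)
  rw [ht]
  exact LSeriesSummable_one_iff.mpr hs

lemma LSeries_pow_one {s : ℂ} (hs : 1 < (s - 1).re) :
    LSeries ↗(ArithmeticFunction.pow 1) s = riemannZeta (s - 1) := by
  have ht : LSeries.term ↗(ArithmeticFunction.pow 1) s = LSeries.term (1 : ℕ → ℂ) (s - 1) :=
    funext (term_pow_one s)
  calc LSeries ↗(ArithmeticFunction.pow 1) s = LSeries (1 : ℕ → ℂ) (s - 1) := by
        simp only [LSeries, ht]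
    _ = riemannZeta (s - 1) := LSeries_one_eq_riemannZeta hs

lemma coe_pow_eq : ↗((↑(ArithmeticFunction.pow 1) : ArithmeticFunction ℂ)) =
    ↗(ArithmeticFunction.pow 1) := funext fun n => by simp [natCoe_apply]

lemma A_coe : A = (↑ζ : ArithmeticFunction ℂ) * ↑(ArithmeticFunction.pow 1) := by
  rw [A, ← natCoe_mul, zeta_mul_pow_eq_sigma]

lemma A_summable {s : ℂ} (hs1 : 1 < s.re) (hsm : 1 < (s - 1).re) :
    LSeriesSummable ↗A s := by
  rw [A_coe]
  exact ArithmeticFunction.LSeriesSummable_mul (zeta_summable hs1) (pow_one_summable hsm)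

lemma LSeries_A {s : ℂ} (hs1 : 1 < s.re) (hsm : 1 < (s - 1).re) :
    LSeries ↗A s = riemannZeta s * riemannZeta (s - 1) := by
  have h := ArithmeticFunction.LSeries_mul' (f := (↑ζ : ArithmeticFunction ℂ))
    (g := ↑(ArithmeticFunction.pow 1)) (zeta_summable hs1) (pow_one_summable hsm)
  rw [A_coe, h, LSeries_coe_zeta hs1, coe_pow_eq, LSeries_pow_one hsm]

end

end OrbitAux

open OrbitAux

/-- For a map `T` with exactly one closed orbit of each length (`F_T(n) = σ₁(n)`), the
orbit Dirichlet series of `T × T` satisfies, for `Re s > 2`,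
`∑_{n ≥ 1} O_{T×T}(n) n^{-s} = ζ(s)² ζ(s-1)/ζ(2s)`, where
`O_{T×T}(n) = (1/n) ∑_{d ∣ n} μ(n/d) σ₁(d)²`. -/
theorem double_product_orbit_dirichlet_series (O : ℕ → ℂ)
    (hO : ∀ n : ℕ, 1 ≤ n →
      O n = (1 / (n : ℂ)) * ∑ d ∈ n.divisors, (moebius (n / d) : ℂ) * (sigma 1 d : ℂ) ^ 2)
    (s : ℂ) (hs : 2 < s.re) :
    LSeries O s = riemannZeta s ^ 2 * riemannZeta (s - 1) / riemannZeta (2 * s) := by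
  have hs1 : 1 < s.re := by linarith
  have hs2 : 1 < (2 * s).re := by
    have h : (2 * s).re = 2 * s.re := by simp [Complex.mul_re]
    rw [h]; linarith
  have hsm : 1 < (s - 1).re := by
    have h : (s - 1).re = s.re - 1 := by simp [Complex.sub_re]
    rw [h]; linarith
  have hOn : ∀ {n : ℕ}, n ≠ 0 → O n = ↗(A * U) n := by
    intro n hn
    rw [hO n (Nat.one_le_iff_ne_zero.mpr hn)]
    have h1 : ∑ d ∈ n.divisors, (μ (n / d) : ℂ) * ((σ 1 d : ℕ) : ℂ) ^ 2 =
        ((↑(ArithmeticFunction.moebius) : ArithmeticFunction ℂ) * (A.pmul A)) n := by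
      rw [mul_apply, Nat.sum_divisorsAntidiagonal'
        (f := fun x y =>
          ((↑(ArithmeticFunction.moebius) : ArithmeticFunction ℂ)) x * (A.pmul A) y)]
      refine Finset.sum_congr rfl fun d hd => ?_
      rw [pmul_apply, A_apply, intCoe_apply, sq]
    rw [h1, key3, W, pmul_apply, natCoe_apply]
    have hpow : ((ArithmeticFunction.pow 1 n : ℕ) : ℂ) = (n : ℂ) := by
      rw [pow_apply, if_neg (by simp)]; push_cast; ring
    rw [hpow]
    have hne : (n : ℂ) ≠ 0 := Nat.cast_ne_zero.mpr hn
    field_simp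
  rw [LSeries_congr hOn s]
  have hmul := ArithmeticFunction.LSeries_mul' (f := A) (g := U)
    (A_summable hs1 hsm) (U_summable hs1)
  rw [hmul, LSeries_A hs1 hsm, LSeries_U hs1 hs2]
  ring
end

section
/- Let T have exactly one closed orbit of each length. Then for \Re(s) > 3, the orbit Dirichlet series of T \times T \times T equals \zeta(s)\zeta(s-1)\zeta(s-2) \prod_p \left(1 + (2p+2)p^{-s} + p^{1-2s}\right), where the coefficients are O(n) = (1/n) \sum_{d|n} \mu(n/d) \sigma_1(d)^3. -/
open ArithmeticFunction
open scoped ArithmeticFunction.Moebius ArithmeticFunction.sigma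

namespace TripleOrbitAux
open Complex Finset

private lemma frac_helper (u v w N D c1 c2 c3 : ℂ) (hu : u ≠ 0) (hv : v ≠ 0)
    (hw : w ≠ 0) (hD : D ≠ 0) (h : c3*u*v + c2*u*w + c1*v*w = D*N) :
    u⁻¹*v⁻¹*w⁻¹*N = (c3/D * w⁻¹ + c2/D * v⁻¹) + c1/D * u⁻¹ := by
  field_simp
  linear_combination (-1)*h

lemma geom_three_hasSum {a X : ℂ} (ha0 : a ≠ 0) (ha1 : a - 1 ≠ 0)
    (hX1 : ‖X‖ < 1) (hX2 : ‖a*X‖ < 1) (hX3 : ‖a^2*X‖ < 1) (f : ℕ → ℂ)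
    (hf0 : f 0 = 1)
    (hf : ∀ e : ℕ, f (e+1) = (a^(e+1))⁻¹ *
      (((a^(e+2) - 1)/(a-1))^3 - ((a^(e+1) - 1)/(a-1))^3)) :
    HasSum (fun e : ℕ => f e * X^e)
      ((1 - X)⁻¹ * (1 - a*X)⁻¹ * (1 - a^2*X)⁻¹ * (1 + (2*a+2)*X + a*X^2)) := by
  have hz : ∀ z : ℂ, ‖z‖ < 1 → 1 - z ≠ 0 := by
    intro z hz h
    rw [sub_eq_zero] at h
    rw [← h] at hz; simp at hz
  have hz1 : 1 - X ≠ 0 := hz _ hX1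
  have hz2 : 1 - a*X ≠ 0 := hz _ hX2
  have hz3 : 1 - a^2*X ≠ 0 := hz _ hX3
  set d1 : ℂ := 3/(a-1)^2 with hd1
  set d2 : ℂ := -3*(a+1)/(a-1)^2 with hd2
  set d3 : ℂ := (a^2+a+1)/(a-1)^2 with hd3
  have h3 := (hasSum_geometric_of_norm_lt_one hX3).mul_left d3
  have h2 := (hasSum_geometric_of_norm_lt_one hX2).mul_left d2
  have h1 := (hasSum_geometric_of_norm_lt_one hX1).mul_left d1
  have hsum := (h3.add h2).add h1
  have key : ∀ e : ℕ, f e * X^e = (d3 * (a^2*X)^e + d2 * (a*X)^e) + d1 * X^e := by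
    intro e
    cases e with
    | zero =>
      simp only [pow_zero, hf0, one_mul, mul_one, hd1, hd2, hd3]
      field_simp
      ring
    | succ e =>
      rw [hf e]
      have hae : a^(e+1) ≠ 0 := pow_ne_zero _ ha0
      have coeff : (a^(e+1))⁻¹ * (((a^(e+2) - 1)/(a-1))^3 - ((a^(e+1) - 1)/(a-1))^3)
          = d3 * (a^2)^(e+1) + d2 * a^(e+1) + d1 := by
        rw [hd1, hd2, hd3]
        field_simp
        ring
      calc (a^(e+1))⁻¹ * (((a^(e+2) - 1)/(a-1))^3 - ((a^(e+1) - 1)/(a-1))^3) * X^(e+1)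
          = (d3 * (a^2)^(e+1) + d2 * a^(e+1) + d1) * X^(e+1) := by rw [coeff]
        _ = (d3 * ((a^2*X))^(e+1) + d2 * ((a*X))^(e+1)) + d1 * X^(e+1) := by
            rw [mul_pow, mul_pow]; ring
  rw [show (fun e : ℕ => f e * X^e)
      = fun e => (d3 * (a^2*X)^e + d2 * (a*X)^e) + d1 * X^e from funext key]
  convert hsum using 1
  · rfl
  rw [hd1, hd2, hd3]
  exact frac_helper (1-X) (1-a*X) (1-a^2*X) _ ((a-1)^2) 3 (-3*(a+1)) (a^2+a+1)
    hz1 hz2 hz3 (pow_ne_zero _ ha1) (by ring)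

noncomputable def invA : ArithmeticFunction ℂ := ⟨fun n => (n:ℂ)⁻¹, by simp⟩

lemma invA_apply (n : ℕ) : invA n = (n:ℂ)⁻¹ := rfl

lemma invA_mult : invA.IsMultiplicative := by
  constructor
  · simp [invA_apply]
  · intro m n _
    simp [invA_apply, mul_inv, mul_comm]

noncomputable def sigC : ArithmeticFunction ℂ :=
  ((σ 1 : ArithmeticFunction ℕ) : ArithmeticFunction ℂ)

noncomputable def FF : ArithmeticFunction ℂ :=
  ((((μ : ArithmeticFunction ℤ) : ArithmeticFunction ℂ) *
    (sigC.pmul (sigC.pmul sigC))).pmul invA)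

lemma FF_mult : FF.IsMultiplicative := by
  refine IsMultiplicative.pmul ?_ invA_mult
  exact (isMultiplicative_moebius.intCast).mul
    ((isMultiplicative_sigma.natCast).pmul
      ((isMultiplicative_sigma.natCast).pmul (isMultiplicative_sigma.natCast)))

lemma FF_apply (n : ℕ) :
    FF n = (1/(n:ℂ)) * ∑ d ∈ n.divisors, (μ (n / d) : ℂ) * (sigma 1 d : ℂ) ^ 3 := by
  rw [FF, pmul_apply, invA_apply, mul_comm, mul_apply,
    Nat.sum_divisorsAntidiagonal'
      (f := fun a b => ((μ : ArithmeticFunction ℂ)) a * (sigC.pmul (sigC.pmul sigC)) b)]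
  rw [one_div]
  congr 1
  apply Finset.sum_congr rfl
  intro x hx
  simp [sigC, pow_succ, mul_assoc, pow_two]

lemma FF_zero : FF 0 = 0 := by simp [FF_apply]

lemma FF_one : FF 1 = 1 := FF_mult.map_one

lemma FF_prime_pow {p : ℕ} (hp : p.Prime) (e : ℕ) :
    FF (p^(e+1)) = ((p:ℂ)^(e+1))⁻¹ *
      ((sigma 1 (p^(e+1)) : ℂ)^3 - (sigma 1 (p^e) : ℂ)^3) := by
  rw [FF_apply, Nat.sum_divisors_prime_pow hp]
  have hstep : ∀ j ∈ range (e+2),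
      (μ (p^(e+1) / p^j) : ℂ) * (sigma 1 (p^j) : ℂ)^3
        = (if j = e+1 then ((sigma 1 (p^(e+1)) : ℂ))^3 else
            if j = e then -((sigma 1 (p^e) : ℂ))^3 else 0) := by
    intro j hj
    rw [mem_range] at hj
    have hj' : j ≤ e + 1 := Nat.lt_succ_iff.mp hj
    rw [Nat.pow_div hj' hp.pos]
    rcases eq_or_ne j (e+1) with rfl | h1
    · simp
    rcases eq_or_ne j e with rfl | h2
    · simp [Nat.succ_sub, moebius_apply_prime hp]
    · have hk : e + 1 - j ≠ 0 := by omega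
      have hk1 : e + 1 - j ≠ 1 := by omega
      rw [moebius_apply_prime_pow hp hk, if_neg hk1, if_neg h1, if_neg h2]
      simp
  rw [Finset.sum_congr rfl hstep, Finset.sum_range_succ, Finset.sum_range_succ]
  rw [if_pos rfl, if_neg (by omega : e ≠ e + 1), if_pos rfl]
  rw [Finset.sum_eq_zero (fun j hj => by
    rw [mem_range] at hj
    rw [if_neg (by omega), if_neg (by omega)])]
  push_cast
  ring

lemma sig_geom {p : ℕ} (j : ℕ) (hp : p.Prime) :
    ((sigma 1 (p^j) : ℕ) : ℂ) * ((p:ℂ) - 1) = (p:ℂ)^(j+1) - 1 := by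
  have : (sigma 1 (p^j) : ℕ) = ∑ i ∈ range (j+1), p^i := by
    rw [sigma_one_apply, Nat.sum_divisors_prime_pow hp]
  rw [this]
  push_cast
  rw [geom_sum_mul]

lemma cast_pow_cpow {p : ℕ} (w : ℂ) (e : ℕ) :
    ((p^e : ℕ) : ℂ)^w = (((p:ℕ) : ℂ)^w)^e := by
  induction e with
  | zero => simp [Complex.one_cpow]
  | succ e ih =>
    have : ((p^(e+1) : ℕ) : ℂ) = ((p^e : ℕ) : ℂ) * ((p : ℕ) : ℂ) := by push_cast; ring
    rw [this, pow_succ, ← ih]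
    simp_rw [← Complex.ofReal_natCast]
    exact Complex.mul_cpow_ofReal_nonneg (by positivity) (by positivity) w

lemma norm_pow_mul_cpow {p : ℕ} (hp : p.Prime) {s : ℂ} (k : ℕ) (hk : (k:ℝ) < s.re) :
    ‖((p:ℕ):ℂ)^k * ((p:ℕ):ℂ)^(-s)‖ < 1 := by
  have hp1 : (1:ℝ) < (p:ℝ) := by exact_mod_cast hp.one_lt
  have hp0 : (0:ℝ) < (p:ℝ) := by positivity
  rw [norm_mul, norm_pow, norm_natCast_cpow_of_pos hp.pos, Complex.norm_natCast]
  rw [neg_re, Real.rpow_neg hp0.le]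
  have : (p:ℝ)^k = (p:ℝ)^((k:ℝ)) := (Real.rpow_natCast _ _).symm
  rw [this, ← Real.rpow_neg_one, ← Real.rpow_mul hp0.le, ← Real.rpow_add hp0]
  exact Real.rpow_lt_one_of_one_lt_of_neg hp1 (by linarith)

lemma inv_cube_sum_le (n : ℕ) : ∑ d ∈ Finset.Icc 1 n, ((d:ℝ)⁻¹)^3 ≤ 2 - (n:ℝ)⁻¹ := by
  induction n with
  | zero => simp
  | succ n ih =>
    rw [Finset.sum_Icc_succ_top (by omega : 1 ≤ n + 1)]
    rcases Nat.eq_zero_or_pos n with rfl | hn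
    · norm_num
    have h1 : ((n:ℝ)+1)⁻¹^3 ≤ (n:ℝ)⁻¹ - ((n:ℝ)+1)⁻¹ := by
      have hn' : (0:ℝ) < n := by exact_mod_cast hn
      rw [inv_sub_inv (by positivity) (by positivity)]
      rw [div_eq_mul_inv, inv_pow]
      have : (n:ℝ) + 1 - n = 1 := by ring
      rw [this, one_mul]
      apply inv_anti₀ (by positivity)
      nlinarith [hn', sq_nonneg ((n:ℝ)+1), mul_nonneg hn'.le hn'.le]
    push_cast
    linarith

lemma inv_cube_sum_le' (n : ℕ) : ∑ d ∈ Finset.Icc 1 n, ((d:ℝ)⁻¹)^3 ≤ 2 := by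
  refine (inv_cube_sum_le n).trans ?_
  have : (0:ℝ) ≤ (n:ℝ)⁻¹ := by positivity
  linarith

lemma divisors_subset_Icc (n : ℕ) : n.divisors ⊆ Finset.Icc 1 n := by
  intro d hd
  have h1 := Nat.pos_of_mem_divisors hd
  rcases Nat.mem_divisors.mp hd with ⟨hdvd, hn0⟩
  exact Finset.mem_Icc.mpr ⟨h1, Nat.le_of_dvd (Nat.pos_of_ne_zero hn0) hdvd⟩

lemma cube_divisor_sum_le (n : ℕ) (hn : 1 ≤ n) :
    ∑ d ∈ n.divisors, (d:ℝ)^3 ≤ 2 * (n:ℝ)^3 := by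
  have h0 : ∑ d ∈ n.divisors, ((d:ℕ):ℝ)^3 = ∑ d ∈ n.divisors, ((n/d : ℕ):ℝ)^3 :=
    (Nat.sum_div_divisors n (fun d => ((d:ℕ):ℝ)^3)).symm
  rw [h0]
  have h1 : ∑ d ∈ n.divisors, ((n/d : ℕ):ℝ)^3 ≤ ∑ d ∈ n.divisors, ((n:ℝ)/(d:ℝ))^3 := by
    apply Finset.sum_le_sum
    intro d hd
    exact pow_le_pow_left₀ (by positivity) (Nat.cast_div_le) 3
  refine h1.trans ?_
  have h2 : ∑ d ∈ n.divisors, ((n:ℝ)/(d:ℝ))^3 = (n:ℝ)^3 * ∑ d ∈ n.divisors, ((d:ℝ)⁻¹)^3 := by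
    rw [Finset.mul_sum]
    apply Finset.sum_congr rfl
    intro d hd
    rw [div_pow, div_eq_mul_inv, inv_pow]
  rw [h2]
  have h3 : ∑ d ∈ n.divisors, ((d:ℝ)⁻¹)^3 ≤ 2 := by
    refine le_trans (Finset.sum_le_sum_of_subset_of_nonneg (divisors_subset_Icc n)
      (fun i _ _ => by positivity)) (inv_cube_sum_le' n)
  calc (n:ℝ)^3 * ∑ d ∈ n.divisors, ((d:ℝ)⁻¹)^3 ≤ (n:ℝ)^3 * 2 := by
        apply mul_le_mul_of_nonneg_left h3 (by positivity)
    _ = 2 * (n:ℝ)^3 := by ring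

lemma sigma_one_le (n : ℕ) (hn : 1 ≤ n) :
    ((sigma 1 n : ℕ):ℝ) ≤ (n:ℝ) * (1 + Real.log n) := by
  have h0 : ((sigma 1 n : ℕ):ℝ) = ∑ d ∈ n.divisors, ((d:ℕ):ℝ) := by
    rw [sigma_one_apply]; push_cast; rfl
  rw [h0, ← Nat.sum_div_divisors n (fun d => ((d:ℕ):ℝ))]
  have h1 : ∑ d ∈ n.divisors, ((n/d : ℕ):ℝ) ≤ ∑ d ∈ n.divisors, (n:ℝ)/(d:ℝ) :=
    Finset.sum_le_sum (fun d hd => Nat.cast_div_le)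
  refine h1.trans ?_
  have h2 : ∑ d ∈ n.divisors, (n:ℝ)/(d:ℝ) ≤ ∑ d ∈ Finset.Icc 1 n, (n:ℝ)/(d:ℝ) :=
    Finset.sum_le_sum_of_subset_of_nonneg (divisors_subset_Icc n) (fun i _ _ => by positivity)
  refine h2.trans ?_
  have h3 : ∑ d ∈ Finset.Icc 1 n, (n:ℝ)/(d:ℝ) = (n:ℝ) * ((harmonic n : ℚ):ℝ) := by
    rw [harmonic_eq_sum_Icc]
    push_cast
    rw [Finset.mul_sum]
    apply Finset.sum_congr rfl
    intro d hd
    rw [div_eq_mul_inv]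
  rw [h3]
  exact mul_le_mul_of_nonneg_left (harmonic_le_one_add_log n) (by positivity)

lemma FF_norm_le (n : ℕ) (hn : 1 ≤ n) :
    ‖FF n‖ ≤ 2 * (n:ℝ)^2 * (1 + Real.log n)^3 := by
  have hn0 : (0:ℝ) < (n:ℝ) := by exact_mod_cast hn
  have hlog : (0:ℝ) ≤ Real.log n := Real.log_natCast_nonneg n
  rw [FF_apply]
  rw [norm_mul]
  have h0 : ‖(1/(n:ℂ))‖ = (n:ℝ)⁻¹ := by
    simp [norm_inv]
  rw [h0]
  have hterm : ∀ d ∈ n.divisors, ‖(μ (n / d) : ℂ) * (sigma 1 d : ℂ) ^ 3‖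
      ≤ (d:ℝ)^3 * (1 + Real.log n)^3 := by
    intro d hd
    have hd1 : 1 ≤ d := Nat.pos_of_mem_divisors hd
    have hdn : d ≤ n := Nat.le_of_dvd (by omega) (Nat.mem_divisors.mp hd).1
    rw [norm_mul, norm_pow]
    have hmu : ‖((μ (n / d) : ℤ) : ℂ)‖ ≤ 1 := by
      rw [Complex.norm_intCast]
      exact_mod_cast (abs_moebius_le_one (n := n / d))
    have hsig : ‖((sigma 1 d : ℕ) : ℂ)‖ ≤ (d:ℝ) * (1 + Real.log n) := by
      rw [Complex.norm_natCast]
      refine (sigma_one_le d hd1).trans ?_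
      have hlg : Real.log d ≤ Real.log n :=
        Real.log_le_log (by exact_mod_cast hd1) (by exact_mod_cast hdn)
      have hd0 : (0:ℝ) < (d:ℝ) := by exact_mod_cast hd1
      nlinarith
    calc ‖((μ (n / d) : ℤ) : ℂ)‖ * ‖((sigma 1 d : ℕ) : ℂ)‖^3
        ≤ 1 * ((d:ℝ) * (1 + Real.log n))^3 := by
          apply mul_le_mul hmu (pow_le_pow_left₀ (norm_nonneg _) hsig 3)
            (by positivity) (by norm_num)
      _ = (d:ℝ)^3 * (1 + Real.log n)^3 := by rw [one_mul, mul_pow]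
  have hsum : ‖∑ d ∈ n.divisors, (μ (n / d) : ℂ) * (sigma 1 d : ℂ) ^ 3‖
      ≤ 2 * (n:ℝ)^3 * (1 + Real.log n)^3 := by
    refine (norm_sum_le _ _).trans ?_
    refine (Finset.sum_le_sum hterm).trans ?_
    rw [← Finset.sum_mul]
    have := cube_divisor_sum_le n hn
    have h13 : (0:ℝ) ≤ (1 + Real.log n)^3 := by positivity
    nlinarith
  calc (n:ℝ)⁻¹ * ‖∑ d ∈ n.divisors, (μ (n / d) : ℂ) * (sigma 1 d : ℂ) ^ 3‖
      ≤ (n:ℝ)⁻¹ * (2 * (n:ℝ)^3 * (1 + Real.log n)^3) := by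
        apply mul_le_mul_of_nonneg_left hsum (by positivity)
    _ = 2 * (n:ℝ)^2 * (1 + Real.log n)^3 := by
        field_simp

lemma FF_summable {s : ℂ} (hs : 3 < s.re) :
    Summable (fun n : ℕ => ‖FF n * (n:ℂ)^(-s)‖) := by
  set sg := s.re with hσ
  set ε : ℝ := (sg - 3)/6 with hε
  set r : ℝ := (sg - 1)/2 with hr
  have hε0 : 0 < ε := by rw [hε]; linarith
  have hr1 : 1 < r := by rw [hr]; linarith
  set C : ℝ := 2 * (1 + 1/ε)^3 with hC
  have hC0 : 0 ≤ C := by positivity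
  have hbase : Summable (fun n : ℕ => C * (n:ℝ)^(-r)) :=
    (Real.summable_nat_rpow.mpr (by linarith)).mul_left C
  refine Summable.of_nonneg_of_le (fun n => norm_nonneg _) (fun n => ?_) hbase
  rcases Nat.eq_zero_or_pos n with rfl | hn
  · simp only [Nat.cast_zero, FF_zero, zero_mul, norm_zero]
    positivity
  have hn0 : (0:ℝ) < (n:ℝ) := by exact_mod_cast hn
  have hn1 : (1:ℝ) ≤ (n:ℝ) := by exact_mod_cast hn
  rw [norm_mul, norm_natCast_cpow_of_pos hn, neg_re, ← hσ]
  have h2 := FF_norm_le n hn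
  have h3 : 1 + Real.log n ≤ (1 + 1/ε) * (n:ℝ)^ε := by
    have ha : Real.log n ≤ (n:ℝ)^ε / ε := Real.log_le_rpow_div (Nat.cast_nonneg n) hε0
    have hb : (1:ℝ) ≤ (n:ℝ)^ε := Real.one_le_rpow hn1 hε0.le
    rw [add_mul, one_mul, div_mul_eq_mul_div, one_mul]
    exact add_le_add hb ha
  have h4 : (1 + Real.log n)^3 ≤ (1 + 1/ε)^3 * ((n:ℝ)^ε)^3 := by
    rw [← mul_pow]
    exact pow_le_pow_left₀ (by positivity) h3 3
  have h5 : ‖FF n‖ * (n:ℝ)^(-sg)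
      ≤ (2 * (n:ℝ)^2 * ((1 + 1/ε)^3 * ((n:ℝ)^ε)^3)) * (n:ℝ)^(-sg) := by
    apply mul_le_mul_of_nonneg_right _ (Real.rpow_nonneg hn0.le _)
    refine h2.trans ?_
    have : (0:ℝ) ≤ 2 * (n:ℝ)^2 := by positivity
    nlinarith [h4, sq_nonneg (n:ℝ)]
  refine h5.trans (le_of_eq ?_)
  have e1 : ((n:ℝ)^ε)^3 = (n:ℝ)^(3*ε) := by
    rw [← Real.rpow_natCast ((n:ℝ)^ε) 3, ← Real.rpow_mul hn0.le]
    norm_num [mul_comm]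
  have e2 : (n:ℝ)^2 = (n:ℝ)^((2:ℝ)) := by
    rw [← Real.rpow_natCast (n:ℝ) 2]; norm_num
  rw [e1, e2, hC]
  rw [show 2 * (n:ℝ)^((2:ℝ)) * ((1 + 1/ε)^3 * (n:ℝ)^(3*ε)) * (n:ℝ)^(-sg)
      = (2 * (1 + 1/ε)^3) * ((n:ℝ)^((2:ℝ)) * (n:ℝ)^(3*ε) * (n:ℝ)^(-sg)) from by ring]
  rw [← Real.rpow_add hn0, ← Real.rpow_add hn0]
  congr 1
  rw [hr, hε]
  ring


lemma norm_log_le_three {z : ℂ} (hz : ‖z‖ ≤ 4/5) : ‖Complex.log (1+z)‖ ≤ 3*‖z‖ := by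
  have h1 : ‖z‖ < 1 := lt_of_le_of_lt hz (by norm_num)
  refine (Complex.norm_log_one_add_le h1).trans ?_
  have h5 : (1:ℝ)/5 ≤ 1 - ‖z‖ := by linarith
  have h6 : (1 - ‖z‖)⁻¹ ≤ 5 := by
    calc (1 - ‖z‖)⁻¹ ≤ ((1:ℝ)/5)⁻¹ := inv_anti₀ (by norm_num) h5
      _ = 5 := by norm_num
  nlinarith [norm_nonneg z, sq_nonneg ‖z‖]

lemma g_norm_bound {s : ℂ} (hs : 3 < s.re) {p : ℕ} (hp : p.Prime) :
    ‖(2*((p:ℕ):ℂ)+2)*((p:ℕ):ℂ)^(-s) + ((p:ℕ):ℂ)*(((p:ℕ):ℂ)^(-s))^2‖ ≤ 4/5 ∧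
    ‖(2*((p:ℕ):ℂ)+2)*((p:ℕ):ℂ)^(-s) + ((p:ℕ):ℂ)*(((p:ℕ):ℂ)^(-s))^2‖
      ≤ 4*((p:ℕ):ℝ)^(1-s.re) := by
  have hR2 : (2:ℝ) ≤ (p:ℝ) := by exact_mod_cast hp.two_le
  have hR0 : (0:ℝ) < (p:ℝ) := by linarith
  have hR1 : (1:ℝ) ≤ (p:ℝ) := by linarith
  have ht : ‖((p:ℕ):ℂ)^(-s)‖ = (p:ℝ)^(-s.re) := by
    rw [norm_natCast_cpow_of_pos hp.pos, neg_re]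
  have hnn : ∀ w : ℝ, (0:ℝ) ≤ (p:ℝ)^w := fun w => Real.rpow_nonneg hR0.le w
  have h2a : ‖2*((p:ℕ):ℂ)+2‖ = 2*(p:ℝ)+2 := by
    rw [show (2*((p:ℕ):ℂ)+2) = ((2*p+2 : ℕ):ℂ) by push_cast; ring, Complex.norm_natCast]
    push_cast; ring
  have hsplit : ‖(2*((p:ℕ):ℂ)+2)*((p:ℕ):ℂ)^(-s) + ((p:ℕ):ℂ)*(((p:ℕ):ℂ)^(-s))^2‖
      ≤ (2*(p:ℝ)+2)*(p:ℝ)^(-s.re) + (p:ℝ)*((p:ℝ)^(-s.re))^2 := by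
    refine (norm_add_le _ _).trans ?_
    rw [norm_mul, norm_mul, norm_pow, h2a, ht, Complex.norm_natCast]
  constructor
  · refine hsplit.trans ?_
    have e3 : (p:ℝ)^(-s.re) ≤ ((p:ℝ)^3)⁻¹ := by
      calc (p:ℝ)^(-s.re) ≤ (p:ℝ)^(-(3:ℝ)) :=
            Real.rpow_le_rpow_of_exponent_le hR1 (by linarith)
        _ = ((p:ℝ)^3)⁻¹ := by
            rw [Real.rpow_neg hR0.le, show ((3:ℝ)) = ((3:ℕ):ℝ) by norm_num,
              Real.rpow_natCast]
    have hA : (2*(p:ℝ)+2)*(p:ℝ)^(-s.re) ≤ 3/4 := by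
      have : (2*(p:ℝ)+2)*(p:ℝ)^(-s.re) ≤ (2*(p:ℝ)+2)*((p:ℝ)^3)⁻¹ := by
        apply mul_le_mul_of_nonneg_left e3 (by linarith)
      refine this.trans ?_
      rw [mul_inv_le_iff₀ (by positivity)]
      have hp2 : 4 ≤ (p:ℝ)^2 := by nlinarith
      have h4 : 4*(p:ℝ) ≤ (p:ℝ)^3 := by nlinarith [mul_le_mul_of_nonneg_right hp2 hR0.le]
      nlinarith
    have hB : (p:ℝ)*((p:ℝ)^(-s.re))^2 ≤ 1/32 := by
      have h1 : ((p:ℝ)^(-s.re))^2 ≤ (((p:ℝ)^3)⁻¹)^2 :=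
        pow_le_pow_left₀ (hnn _) e3 2
      have h2 : (p:ℝ)*((p:ℝ)^(-s.re))^2 ≤ (p:ℝ)*(((p:ℝ)^3)⁻¹)^2 :=
        mul_le_mul_of_nonneg_left h1 hR0.le
      refine h2.trans ?_
      have h32 : (32:ℝ) ≤ (p:ℝ)^5 := by
        calc (32:ℝ) = 2^5 := by norm_num
          _ ≤ (p:ℝ)^5 := pow_le_pow_left₀ (by norm_num) hR2 5
      have e : (p:ℝ) * (((p:ℝ)^3)⁻¹)^2 = ((p:ℝ)^5)⁻¹ := by
        field_simp
      rw [e]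
      calc ((p:ℝ)^5)⁻¹ ≤ (32:ℝ)⁻¹ := inv_anti₀ (by norm_num) h32
        _ = 1/32 := by norm_num
    linarith
  · refine hsplit.trans ?_
    have hA : (2*(p:ℝ)+2)*(p:ℝ)^(-s.re) ≤ 3*(p:ℝ)^(1-s.re) := by
      have e1 : (p:ℝ)*(p:ℝ)^(-s.re) = (p:ℝ)^(1-s.re) := by
        rw [show (1:ℝ)-s.re = 1 + (-s.re) by ring, Real.rpow_add hR0, Real.rpow_one]
      calc (2*(p:ℝ)+2)*(p:ℝ)^(-s.re) ≤ (3*(p:ℝ))*(p:ℝ)^(-s.re) := by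
            apply mul_le_mul_of_nonneg_right (by linarith) (hnn _)
        _ = 3*((p:ℝ)*(p:ℝ)^(-s.re)) := by ring
        _ = 3*(p:ℝ)^(1-s.re) := by rw [e1]
    have hB : (p:ℝ)*((p:ℝ)^(-s.re))^2 ≤ (p:ℝ)^(1-s.re) := by
      have e1 : (p:ℝ)*((p:ℝ)^(-s.re))^2 = (p:ℝ)^(1-2*s.re) := by
        rw [← Real.rpow_natCast ((p:ℝ)^(-s.re)) 2, ← Real.rpow_mul hR0.le]
        rw [show (1:ℝ)-2*s.re = 1 + (-s.re*2) by ring, Real.rpow_add hR0, Real.rpow_one]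
        norm_num
      rw [e1]
      exact Real.rpow_le_rpow_of_exponent_le hR1 (by linarith)
    linarith

end TripleOrbitAux

open TripleOrbitAux

/-- For a map `T` with exactly one closed orbit of each length, the orbit Dirichlet
series of `T × T × T` satisfies, for `Re s > 3`,
`∑_{n ≥ 1} O(n) n^{-s} = ζ(s)ζ(s-1)ζ(s-2) ∏_p (1 + (2p+2)p^{-s} + p^{1-2s})`,
where `O(n) = (1/n) ∑_{d ∣ n} μ(n/d) σ₁(d)³`. -/
theorem triple_product_orbit_dirichlet_series (O : ℕ → ℂ)
    (hO : ∀ n : ℕ, 1 ≤ n →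
      O n = (1 / (n : ℂ)) * ∑ d ∈ n.divisors, (ArithmeticFunction.moebius (n / d) : ℂ) * (sigma 1 d : ℂ) ^ 3)
    (s : ℂ) (hs : 3 < s.re) :
    LSeries O s = riemannZeta s * riemannZeta (s - 1) * riemannZeta (s - 2) *
      ∏' p : Nat.Primes,
        (1 + (2 * (p : ℂ) + 2) * (p : ℂ) ^ (-s) + (p : ℂ) ^ (1 - 2 * s)) := by
  classical
  have hz1 : 1 < s.re := by linarith
  have hz2 : 1 < (s-1).re := by simp only [Complex.sub_re, Complex.one_re]; linarith
  have hz3 : 1 < (s-2).re := by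
    simp only [Complex.sub_re]
    have : (2:ℂ).re = 2 := by norm_num
    rw [this]; linarith
  set f : ℕ → ℂ := fun n => FF n * (n:ℂ)^(-s) with hf
  have hf1 : f 1 = 1 := by simp [hf, FF_one]
  have hf0 : f 0 = 0 := by simp [hf, FF_zero]
  have hmul : ∀ {m n : ℕ}, Nat.Coprime m n → f (m*n) = f m * f n := by
    intro m n hmn
    simp only [hf]
    rw [FF_mult.map_mul_of_coprime hmn]
    have hc : ((m:ℂ) * (n:ℂ))^(-s) = (m:ℂ)^(-s) * (n:ℂ)^(-s) := by
      simp_rw [← Complex.ofReal_natCast]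
      exact Complex.mul_cpow_ofReal_nonneg (Nat.cast_nonneg m) (Nat.cast_nonneg n) (-s)
    rw [Nat.cast_mul, hc]
    ring
  have hsum : Summable (fun n => ‖f n‖) := FF_summable hs
  have euler := EulerProduct.eulerProduct_hasProd hf1 hmul hsum hf0
  have hLS : ∑' n, f n = LSeries O s := by
    rw [LSeries]
    apply tsum_congr
    intro n
    rcases Nat.eq_zero_or_pos n with rfl | hn
    · simp [hf, FF_zero]
    · rw [LSeries.term_of_ne_zero hn.ne', hO n hn, ← FF_apply, hf]
      show FF n * (n:ℂ)^(-s) = FF n / (n:ℂ)^s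
      rw [Complex.cpow_neg, div_eq_mul_inv]
  rw [hLS] at euler
  -- local factors
  have hlocal : ∀ p : Nat.Primes, HasSum (fun e : ℕ => f ((p:ℕ)^e))
      ((1 - ((p:ℕ):ℂ)^(-s))⁻¹ * (1 - ((p:ℕ):ℂ)*((p:ℕ):ℂ)^(-s))⁻¹ *
       (1 - ((p:ℕ):ℂ)^2*((p:ℕ):ℂ)^(-s))⁻¹ *
       (1 + (2*((p:ℕ):ℂ)+2)*((p:ℕ):ℂ)^(-s) + ((p:ℕ):ℂ)*(((p:ℕ):ℂ)^(-s))^2)) := by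
    intro p
    have hp := p.prop
    have ha0 : ((p:ℕ):ℂ) ≠ 0 := Nat.cast_ne_zero.mpr hp.pos.ne'
    have ha1 : ((p:ℕ):ℂ) - 1 ≠ 0 := sub_ne_zero.mpr (by
      exact_mod_cast hp.one_lt.ne')
    have hX1 : ‖((p:ℕ):ℂ)^(-s)‖ < 1 := by
      have h0 := norm_pow_mul_cpow hp (s := s) (k := 0) (by norm_num; linarith)
      rwa [pow_zero, one_mul] at h0
    have hX2 : ‖((p:ℕ):ℂ) * ((p:ℕ):ℂ)^(-s)‖ < 1 := by
      have h0 := norm_pow_mul_cpow hp (s := s) (k := 1) (by norm_num; linarith)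
      rwa [pow_one] at h0
    have hX3 : ‖((p:ℕ):ℂ)^2 * ((p:ℕ):ℂ)^(-s)‖ < 1 :=
      norm_pow_mul_cpow hp (s := s) (k := 2) (by norm_num; linarith)
    have hFF : ∀ e : ℕ, FF ((p:ℕ)^(e+1)) = ((((p:ℕ):ℂ))^(e+1))⁻¹ *
        (((((p:ℕ):ℂ)^(e+2) - 1)/(((p:ℕ):ℂ)-1))^3
          - ((((p:ℕ):ℂ)^(e+1) - 1)/(((p:ℕ):ℂ)-1))^3) := by
      intro e
      rw [FF_prime_pow hp e]
      rw [show ((sigma 1 ((p:ℕ)^(e+1)) : ℕ) : ℂ) = (((p:ℕ):ℂ)^(e+2) - 1)/(((p:ℕ):ℂ)-1) from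
        (eq_div_iff ha1).mpr (sig_geom (e+1) hp)]
      rw [show ((sigma 1 ((p:ℕ)^e) : ℕ) : ℂ) = (((p:ℕ):ℂ)^(e+1) - 1)/(((p:ℕ):ℂ)-1) from
        (eq_div_iff ha1).mpr (sig_geom e hp)]
    have hgeo := geom_three_hasSum ha0 ha1 hX1 hX2 hX3 (fun e => FF ((p:ℕ)^e))
      (by simpa using FF_one) hFF
    have hfun : (fun e : ℕ => f ((p:ℕ)^e))
        = fun e => FF ((p:ℕ)^e) * (((p:ℕ):ℂ)^(-s))^e := by
      funext e
      simp only [hf]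
      rw [cast_pow_cpow (-s) e]
    rw [hfun]
    exact hgeo
  -- zeta Euler products
  have H1 := riemannZeta_eulerProduct_hasProd hz1
  have H2 := riemannZeta_eulerProduct_hasProd hz2
  have H3 := riemannZeta_eulerProduct_hasProd hz3
  have e2 : (fun p : Nat.Primes => (1 - ((p:ℕ):ℂ)^(-(s-1)))⁻¹)
      = fun p : Nat.Primes => (1 - ((p:ℕ):ℂ)*((p:ℕ):ℂ)^(-s))⁻¹ := by
    funext p
    have ha0 : ((p:ℕ):ℂ) ≠ 0 := Nat.cast_ne_zero.mpr p.prop.pos.ne'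
    rw [show -(s-1) = 1 + (-s) by ring, Complex.cpow_add _ _ ha0, Complex.cpow_one]
  have e3 : (fun p : Nat.Primes => (1 - ((p:ℕ):ℂ)^(-(s-2)))⁻¹)
      = fun p : Nat.Primes => (1 - ((p:ℕ):ℂ)^2*((p:ℕ):ℂ)^(-s))⁻¹ := by
    funext p
    have ha0 : ((p:ℕ):ℂ) ≠ 0 := Nat.cast_ne_zero.mpr p.prop.pos.ne'
    rw [show -(s-2) = 2 + (-s) by ring, Complex.cpow_add _ _ ha0]
    congr 2
    rw [show (2:ℂ) = ((2:ℕ):ℂ) by norm_num, Complex.cpow_natCast]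
  rw [e2] at H2
  rw [e3] at H3
  -- multipliability of the extra factor
  have hgne : ∀ p : Nat.Primes,
      (1 + (2*((p:ℕ):ℂ)+2)*((p:ℕ):ℂ)^(-s) + ((p:ℕ):ℂ)*(((p:ℕ):ℂ)^(-s))^2) ≠ 0 := by
    intro p
    have hb := (g_norm_bound hs p.prop).1
    intro h
    rw [add_assoc] at h
    have : ‖(2*((p:ℕ):ℂ)+2)*((p:ℕ):ℂ)^(-s) + ((p:ℕ):ℂ)*(((p:ℕ):ℂ)^(-s))^2‖ = 1 := by
      have h1 : (2*((p:ℕ):ℂ)+2)*((p:ℕ):ℂ)^(-s) + ((p:ℕ):ℂ)*(((p:ℕ):ℂ)^(-s))^2 = -1 := by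
        linear_combination h
      rw [h1]
      simp
    rw [this] at hb
    norm_num at hb
  have hlogsum : Summable (fun p : Nat.Primes => Complex.log
      (1 + (2*((p:ℕ):ℂ)+2)*((p:ℕ):ℂ)^(-s) + ((p:ℕ):ℂ)*(((p:ℕ):ℂ)^(-s))^2)) := by
    have hbase : Summable (fun p : Nat.Primes => 12*((p:ℕ):ℝ)^(1-s.re)) :=
      (Nat.Primes.summable_rpow.mpr (by linarith)).mul_left 12
    apply Summable.of_norm
    refine Summable.of_nonneg_of_le (fun p => norm_nonneg _) (fun p => ?_) hbase
    have hb1 := (g_norm_bound hs p.prop).1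
    have hb2 := (g_norm_bound hs p.prop).2
    rw [add_assoc]
    refine (norm_log_le_three hb1).trans ?_
    linarith
  have hgmult : Multipliable (fun p : Nat.Primes =>
      (1 + (2*((p:ℕ):ℂ)+2)*((p:ℕ):ℂ)^(-s) + ((p:ℕ):ℂ)*(((p:ℕ):ℂ)^(-s))^2)) := by
    exact Complex.multipliable_of_summable_log hlogsum
  have HG := hgmult.hasProd
  have Htot := ((H1.mul H2).mul H3).mul HG
  -- identify the Euler product of f with the product of the four factors
  have heq : (fun p : Nat.Primes => ∑' e : ℕ, f ((p:ℕ)^e))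
      = fun p : Nat.Primes =>
        (1 - ((p:ℕ):ℂ)^(-s))⁻¹ * (1 - ((p:ℕ):ℂ)*((p:ℕ):ℂ)^(-s))⁻¹ *
        (1 - ((p:ℕ):ℂ)^2*((p:ℕ):ℂ)^(-s))⁻¹ *
        (1 + (2*((p:ℕ):ℂ)+2)*((p:ℕ):ℂ)^(-s) + ((p:ℕ):ℂ)*(((p:ℕ):ℂ)^(-s))^2) := by
    funext p
    exact (hlocal p).tsum_eq
  rw [heq] at euler
  have hmain := euler.unique Htot
  rw [hmain]
  congr 1
  apply tprod_congr
  intro p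
  have ha0 : ((p:ℕ):ℂ) ≠ 0 := Nat.cast_ne_zero.mpr p.prop.pos.ne'
  rw [show (1:ℂ) - 2*s = 1 + (-s + -s) by ring, Complex.cpow_add _ _ ha0,
    Complex.cpow_add _ _ ha0, Complex.cpow_one]
  ring
end
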